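/- Let (p_k, q_k) for k = 1, ..., n satisfy p_k, q_k > 1, gcd(p_k, q_k) = 1, Δ_k = p_k - p_{k-1}*q_{k-1}*q_k < 0 for k ≥ 2, Δ_1 = p_1 - q_1 < 0, and the Abhyankar–Moh semigroup condition p_{k+1} ∈ N*q_1*...*q_k + N*p_1*q_2*...*q_k + ... + N*p_{k-1}*q_k + N*p_k. Then the genus g defined by 1 - 2g = q_1*...*q_n + Σ_{i=1}^{n-1} p_i*(1-q_i)*q_{i+1}*...*q_n + p_n*(1-q_n) is a nonnegative integer. -/

import Mathlib

/-- The generators of the semigroup `H_k` of the paper: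
`q_1⋯q_k` together with `p_i * q_{i+1}⋯q_k` for `1 ≤ i ≤ k`. -/
def gensH (p q : ℕ → ℕ) (k : ℕ) : Set ℕ :=
  {∏ i ∈ Finset.Icc 1 k, q i} ∪
    {x | ∃ i ∈ Finset.Icc 1 k, x = p i * ∏ j ∈ Finset.Icc (i + 1) k, q j}

theorem aux_genus (p q : ℕ → ℕ) (hp : ∀ i, 1 < p i) (hq : ∀ i, 1 < q i)
    (hcop : ∀ i, Nat.Coprime (p i) (q i)) (n : ℕ) :
    ∃ g : ℕ, 1 - 2 * (g : ℤ) =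
      (∏ i ∈ Finset.Icc 1 n, (q i : ℤ)) +
        ∑ i ∈ Finset.Icc 1 n,
          (p i : ℤ) * (1 - (q i : ℤ)) * ∏ j ∈ Finset.Icc (i + 1) n, (q j : ℤ) := by
  induction n with
  | zero => exact ⟨0, by simp⟩
  | succ n ih =>
    obtain ⟨g, hg⟩ := ih
    have heven : Even ((p (n+1) - 1) * (q (n+1) - 1)) := by
      rcases Nat.even_or_odd (p (n+1)) with h | h
      · rcases Nat.even_or_odd (q (n+1)) with h' | h'
        · exfalso
          have : (2 : ℕ) ∣ Nat.gcd (p (n+1)) (q (n+1)) :=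
            Nat.dvd_gcd h.two_dvd h'.two_dvd
          rw [hcop (n+1)] at this
          omega
        · exact (Nat.even_mul).2 (Or.inr (Nat.Odd.sub_odd h' odd_one))
      · exact (Nat.even_mul).2 (Or.inl (Nat.Odd.sub_odd h odd_one))
    obtain ⟨c, hc⟩ := heven
    have hcZ : ((p (n+1) : ℤ) - 1) * ((q (n+1) : ℤ) - 1) = 2 * c := by
      have h1 : 1 ≤ p (n+1) := le_of_lt (hp _)
      have h2 : 1 ≤ q (n+1) := le_of_lt (hq _)
      have := hc
      zify [h1, h2] at this
      linarith
    refine ⟨q (n+1) * g + c, ?_⟩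
    rw [Finset.prod_Icc_succ_top (by omega), Finset.sum_Icc_succ_top (by omega)]
    have hsum : ∑ i ∈ Finset.Icc 1 n,
        (p i : ℤ) * (1 - (q i : ℤ)) * ∏ j ∈ Finset.Icc (i + 1) (n + 1), (q j : ℤ)
        = (∑ i ∈ Finset.Icc 1 n,
            (p i : ℤ) * (1 - (q i : ℤ)) * ∏ j ∈ Finset.Icc (i + 1) n, (q j : ℤ)) *
            (q (n+1) : ℤ) := by
      rw [Finset.sum_mul]
      refine Finset.sum_congr rfl fun i hi => ?_
      have hi' : i + 1 ≤ n + 1 := by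
        have := (Finset.mem_Icc.1 hi).2; omega
      rw [Finset.prod_Icc_succ_top hi']
      ring
    rw [hsum]
    have hempty : (∏ j ∈ Finset.Icc (n + 1 + 1) (n + 1), (q j : ℤ)) = 1 := by
      rw [Finset.Icc_eq_empty (by omega), Finset.prod_empty]
    rw [hempty]
    push_cast
    linear_combination (q (n+1) : ℤ) * hg + hcZ

/-- The genus defined by the splice-diagram formula
`1 - 2g = q₁⋯qₙ + ∑ pᵢ(1-qᵢ)q_{i+1}⋯qₙ` is a nonnegative integer. -/
theorem stmt_19 (n : ℕ) (hn : 1 ≤ n) (p q : ℕ → ℕ)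
    (hp : ∀ i, 1 < p i) (hq : ∀ i, 1 < q i)
    (hcop : ∀ i, Nat.Coprime (p i) (q i))
    (hΔ1 : p 1 < q 1)
    (hΔ : ∀ k, 2 ≤ k → k ≤ n → (p k : ℤ) < (p (k - 1) : ℤ) * q (k - 1) * q k)
    (hAM : ∀ k, 1 ≤ k → k ≤ n - 1 → p (k + 1) ∈ AddSubmonoid.closure (gensH p q k)) :
    ∃ g : ℕ, 1 - 2 * (g : ℤ) =
      (∏ i ∈ Finset.Icc 1 n, (q i : ℤ)) +
        ∑ i ∈ Finset.Icc 1 n,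
          (p i : ℤ) * (1 - (q i : ℤ)) * ∏ j ∈ Finset.Icc (i + 1) n, (q j : ℤ) := by
  exact aux_genus p q hp hq hcop n
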